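/- Let n ≥ 1 and let γ : ℝ → ℝ be strictly increasing with γ(0) = 0. Let x, x_d : [0, ∞) → ℝⁿ be differentiable trajectories such that at every time t with x(t) ≠ x_d(t), the inequality ⟨x(t) − x_d(t), x'(t) − x_d'(t)⟩ ≤ −γ(‖x(t) − x_d(t)‖)·‖x(t) − x_d(t)‖ holds. Then ‖x(t) − x_d(t)‖ → 0 as t → ∞ (the robot asymptotically converges to its allocated desired point). -/

import Mathlib

open Filter in
/-- Asymptotic convergence to the allocated desired point (property P2): under
the desired-point convergence CBF condition with zero slack, the tracking
error ‖x(t) − x_d(t)‖ tends to 0 as t → ∞. -/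
theorem stmt_16 (n : ℕ) (hn : 1 ≤ n)
    (γ : ℝ → ℝ) (hγ : StrictMono γ) (hγ0 : γ 0 = 0)
    (x xd : ℝ → EuclideanSpace ℝ (Fin n))
    (hx : ∀ t, 0 ≤ t → DifferentiableAt ℝ x t)
    (hxd : ∀ t, 0 ≤ t → DifferentiableAt ℝ xd t)
    (hcbf : ∀ t, 0 ≤ t → x t ≠ xd t →
      (inner ℝ (x t - xd t) (deriv x t - deriv xd t) : ℝ) ≤
        -γ (‖x t - xd t‖) * ‖x t - xd t‖) :
    Tendsto (fun t => ‖x t - xd t‖) atTop (nhds 0) := by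
  set e : ℝ → EuclideanSpace ℝ (Fin n) := fun t => x t - xd t with he
  set V : ℝ → ℝ := fun t => (inner ℝ (e t) (e t) : ℝ) with hV
  -- derivative of V
  have hVd : ∀ t, 0 ≤ t →
      HasDerivAt V (2 * (inner ℝ (e t) (deriv x t - deriv xd t) : ℝ)) t := by
    intro t ht
    have hex : HasDerivAt e (deriv x t - deriv xd t) t :=
      ((hx t ht).hasDerivAt).sub ((hxd t ht).hasDerivAt)
    have h := (hex.inner ℝ hex)
    have : (inner ℝ (e t) (deriv x t - deriv xd t) : ℝ) +
        (inner ℝ (deriv x t - deriv xd t) (e t) : ℝ)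
        = 2 * (inner ℝ (e t) (deriv x t - deriv xd t) : ℝ) := by
      rw [real_inner_comm (deriv x t - deriv xd t) (e t)]; ring
    rwa [this] at h
  have hVnonneg : ∀ t, 0 ≤ V t := fun t => real_inner_self_nonneg
  have hVnorm : ∀ t, V t = ‖e t‖ ^ 2 := fun t => real_inner_self_eq_norm_sq _
  -- deriv V ≤ 0 on [0,∞)
  have hderivV : ∀ t, 0 ≤ t → deriv V t = 2 * (inner ℝ (e t) (deriv x t - deriv xd t) : ℝ) :=
    fun t ht => (hVd t ht).deriv
  have hVle : ∀ t, 0 ≤ t → deriv V t ≤ 0 := by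
    intro t ht
    rw [hderivV t ht]
    by_cases h0 : x t = xd t
    · have : e t = 0 := by simp [he, h0]
      simp [this]
    · have hb := hcbf t ht h0
      have hr : 0 < ‖e t‖ := by
        simp only [he, norm_pos_iff, sub_ne_zero]; exact h0
      have hγr : 0 < γ ‖e t‖ := by
        have := hγ hr
        rwa [hγ0] at this
      nlinarith [hb]
  have hVcont : ContinuousOn V (Set.Ici (0:ℝ)) := fun t ht =>
    ((hVd t ht).differentiableAt.continuousAt).continuousWithinAt
  have hVanti : AntitoneOn V (Set.Ici (0:ℝ)) := by
    apply antitoneOn_of_deriv_nonpos (convex_Ici 0) hVcont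
    · intro t ht
      rw [interior_Ici] at ht
      exact (hVd t (le_of_lt ht)).differentiableAt.differentiableWithinAt
    · intro t ht
      rw [interior_Ici] at ht
      exact hVle t (le_of_lt ht)
  -- g = V ∘ max · 0 is antitone on ℝ
  set g : ℝ → ℝ := fun t => V (max t 0) with hg
  have hganti : Antitone g := by
    intro s t hst
    exact hVanti (le_max_right s 0) (le_max_right t 0) (max_le_max hst le_rfl)
  have hgbdd : BddBelow (Set.range g) := ⟨0, by rintro _ ⟨t, rfl⟩; exact hVnonneg _⟩
  set L : ℝ := ⨅ t, g t with hL
  have hgL : Tendsto g atTop (nhds L) := tendsto_atTop_ciInf hganti hgbdd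
  have hgeL : ∀ t, L ≤ g t := fun t => ciInf_le hgbdd t
  have hL0 : 0 ≤ L := le_ciInf fun t => hVnonneg _
  -- L = 0
  have hLzero : L = 0 := by
    by_contra hne
    have hLpos : 0 < L := lt_of_le_of_ne hL0 (Ne.symm hne)
    have hsL : 0 < Real.sqrt L := Real.sqrt_pos.mpr hLpos
    set c : ℝ := γ (Real.sqrt L) with hc
    have hcpos : 0 < c := by
      have := hγ hsL; rwa [hγ0] at this
    set K : ℝ := 2 * c * Real.sqrt L with hK
    have hKpos : 0 < K := by positivity
    -- deriv V ≤ -K on [0,∞)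
    have hder : ∀ t, 0 ≤ t → deriv V t ≤ -K := by
      intro t ht
      have hVt : L ≤ V t := by
        have := hgeL t
        simpa [hg, max_eq_left ht] using this
      have hrt : Real.sqrt L ≤ ‖e t‖ := by
        rw [show ‖e t‖ = Real.sqrt (V t) by
          rw [hVnorm t, Real.sqrt_sq (norm_nonneg _)]]
        exact Real.sqrt_le_sqrt hVt
      have hrpos : 0 < ‖e t‖ := lt_of_lt_of_le hsL hrt
      have h0 : x t ≠ xd t := by
        intro h
        rw [show e t = 0 by simp [he, h]] at hrpos
        simp at hrpos
      have hb := hcbf t ht h0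
      have hγmono : c ≤ γ ‖e t‖ := hγ.monotone hrt
      have : c * Real.sqrt L ≤ γ ‖e t‖ * ‖e t‖ :=
        mul_le_mul hγmono hrt (le_of_lt hsL) (le_trans (le_of_lt hcpos) hγmono)
      rw [hderivV t ht]
      nlinarith
    -- h t = V t + K t is antitone on [0,∞)
    set h : ℝ → ℝ := fun t => V t + K * t with hh
    have hhd : ∀ t, 0 ≤ t → HasDerivAt h (deriv V t + K) t := by
      intro t ht
      have : HasDerivAt (fun t => K * t) K t := by
        simpa using (hasDerivAt_id t).const_mul K
      rw [hderivV t ht]; exact (hVd t ht).add this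
    have hhanti : AntitoneOn h (Set.Ici (0:ℝ)) := by
      apply antitoneOn_of_deriv_nonpos (convex_Ici 0)
      · exact fun t ht => ((hhd t ht).differentiableAt.continuousAt).continuousWithinAt
      · intro t ht
        rw [interior_Ici] at ht
        exact (hhd t (le_of_lt ht)).differentiableAt.differentiableWithinAt
      · intro t ht
        rw [interior_Ici] at ht
        rw [(hhd t (le_of_lt ht)).deriv]
        linarith [hder t (le_of_lt ht)]
    -- contradiction at t = V 0 / K + 1
    have hdiv : (0:ℝ) ≤ V 0 / K := div_nonneg (hVnonneg 0) hKpos.le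
    have hTpos : (0:ℝ) ≤ V 0 / K + 1 := by linarith
    have hkey := hhanti (Set.self_mem_Ici) hTpos hTpos
    simp only [hh] at hkey
    have hVT := hVnonneg (V 0 / K + 1)
    have h1 : K * (V 0 / K + 1) ≤ V 0 := by linarith
    have h2 : K * (V 0 / K) + K ≤ V 0 := by nlinarith
    rw [mul_div_cancel₀ _ (ne_of_gt hKpos)] at h2
    linarith
  -- conclude
  have hVlim : Tendsto V atTop (nhds 0) := by
    rw [← hLzero]
    apply hgL.congr'
    filter_upwards [eventually_ge_atTop (0:ℝ)] with t ht
    simp [hg, max_eq_left ht]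
  have : Tendsto (fun t => Real.sqrt (V t)) atTop (nhds 0) := by
    have := (Real.continuous_sqrt.tendsto 0).comp hVlim
    rw [Real.sqrt_zero] at this; exact this
  apply this.congr
  intro t
  rw [hVnorm t, Real.sqrt_sq (norm_nonneg _)]
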